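/- Let A be a finite set with |A| ≥ 2, n a positive integer, V an n-dimensional combinatorial space of A^{<ℕ} with canonical isomorphism I_V : A^n → V, and p ≥ 2 with p ≤ |A|^n. Then for every tuple (t₁,…,t_p) of distinct elements of A^n: τ((t₁,…,t_p)) = τ((I_V(t₁),…,I_V(t_p))) and s((t₁,…,t_p)) = s((I_V(t₁),…,I_V(t_p))); consequently, for every nonempty G ⊆ A^n, τ(G) = τ(I_V(G)) and s(G) = s(I_V(G)). -/

import Mathlib

/-- The type of a tuple `(t₁,…,t_p)` of elements of `A^n`, represented as a list of rows:
form the list of rows of the `n × p` coordinate matrix (row `i` is `j ↦ t_j(i)`),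
delete the constant rows, and collapse consecutive identical rows. -/
def typeRows {A : Type*} [DecidableEq A] {n p : ℕ} (t : Fin p → Fin n → A) :
    List (Fin p → A) :=
  (((List.finRange n).map (fun i => fun j => t j i)).filter
      (fun r => decide (∃ j j' : Fin p, r j ≠ r j'))).destutter (· ≠ ·)

/-- Two nonempty finite sets have the same type if they admit enumerations whose
tuple-types coincide. -/
def SameType {A : Type*} [DecidableEq A] {n m : ℕ}
    (G₁ : Finset (Fin n → A)) (G₂ : Finset (Fin m → A)) : Prop :=
  ∃ (p : ℕ) (t₁ : Fin p → Fin n → A) (t₂ : Fin p → Fin m → A),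
    Function.Injective t₁ ∧ Function.Injective t₂ ∧
    (∀ x, x ∈ G₁ ↔ ∃ j, t₁ j = x) ∧ (∀ x, x ∈ G₂ ↔ ∃ j, t₂ j = x) ∧
    typeRows t₁ = typeRows t₂

/-- A tuple `(t₁,…,t_p)` of elements of `A^n` is `ℓ`-separated if for every `j ≥ 2`
there is a set `I` of `ℓ` coordinates such that every earlier `t_q` differs from `t_j`
at some coordinate of `I`. -/
def SepTuple {A : Type*} {n p : ℕ} (ℓ : ℕ) (t : Fin p → Fin n → A) : Prop :=
  ∀ j : Fin p, 1 ≤ (j : ℕ) → ∃ I : Finset (Fin n), I.card = ℓ ∧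
    ∀ q : Fin p, (q : ℕ) < (j : ℕ) → ∃ i ∈ I, t j i ≠ t q i

/-- The separation index of a tuple: the least positive `ℓ` for which it is `ℓ`-separated. -/
noncomputable def sepIndexTuple {A : Type*} {n p : ℕ} (t : Fin p → Fin n → A) : ℕ :=
  sInf {ℓ | 0 < ℓ ∧ SepTuple ℓ t}

/-- The separation index of a nonempty finite set: the minimum over all enumerations. -/
noncomputable def sepIndexSet {A : Type*} [DecidableEq A] {n : ℕ}
    (G : Finset (Fin n → A)) : ℕ :=
  sInf {ℓ | 0 < ℓ ∧ ∃ t : Fin G.card → Fin n → A,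
    Function.Injective t ∧ (∀ j, t j ∈ G) ∧ SepTuple ℓ t}

/-- An `r`-variable word over `A` of length `n`: every variable appears, and the
appearances of the variables come in increasing order. -/
def IsVarWordM {A : Type*} {n r : ℕ} (w : Fin n → A ⊕ Fin r) : Prop :=
  (∀ l : Fin r, ∃ i, w i = Sum.inr l) ∧
    ∀ (i i' : Fin n) (l l' : Fin r),
      w i = Sum.inr l → w i' = Sum.inr l' → l < l' → i < i'

/-- The canonical isomorphism of the combinatorial space generated by an `r`-variable
word `w`: substitute `z l` for the variable `x_l`. -/
def embW {A : Type*} {n r : ℕ} (w : Fin n → A ⊕ Fin r) (z : Fin r → A) : Fin n → A :=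
  fun i => Sum.elim id z (w i)

namespace Stmt19Aux

open List

/-- destutter'-map compatibility: destuttering, mapping, destuttering again gives the
same as mapping then destuttering. -/
lemma destutter'_map {α β : Type*} [DecidableEq α] [DecidableEq β] (f : α → β) :
    ∀ (l : List α) (a : α), ∃ r : List α,
      List.destutter' (· ≠ ·) a l = a :: r ∧
      List.destutter' (· ≠ ·) (f a) (r.map f) = List.destutter' (· ≠ ·) (f a) (l.map f)
  | [], a => ⟨[], by simp [List.destutter'_nil]⟩
  | b :: l, a => by
    by_cases hab : a = b
    · obtain ⟨r, h1, h2⟩ := destutter'_map f l a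
      refine ⟨r, ?_, ?_⟩
      · rw [List.destutter'_cons_neg _ (by simp [hab]), h1]
      · rw [List.map_cons, List.destutter'_cons_neg _ (by simp [hab]), h2]
    · obtain ⟨r, h1, h2⟩ := destutter'_map f l b
      refine ⟨b :: r, ?_, ?_⟩
      · rw [List.destutter'_cons_pos _ hab, h1]
      · by_cases hfab : f a = f b
        · rw [List.map_cons, List.destutter'_cons_neg _ (by simp [hfab]),
            List.map_cons, List.destutter'_cons_neg _ (by simp [hfab]), hfab, h2]
        · rw [List.map_cons, List.destutter'_cons_pos _ hfab,
            List.map_cons, List.destutter'_cons_pos _ hfab, h2]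

lemma destutter_map_destutter {α β : Type*} [DecidableEq α] [DecidableEq β]
    (f : α → β) (l : List α) :
    ((l.destutter (· ≠ ·)).map f).destutter (· ≠ ·) = (l.map f).destutter (· ≠ ·) := by
  cases l with
  | nil => simp
  | cons a l =>
    obtain ⟨r, h1, h2⟩ := destutter'_map f l a
    rw [List.map_cons, List.destutter_cons', List.destutter_cons', h1, List.map_cons,
      List.destutter_cons', h2]

lemma mem_destutter'_of_mem {α : Type*} [DecidableEq α] :
    ∀ (l : List α) (b x : α), x ∈ b :: l → x ∈ List.destutter' (· ≠ ·) b l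
  | [], b, x, h => by
    rw [List.destutter'_nil]; simpa using h
  | c :: l, b, x, h => by
    by_cases hbc : b = c
    · rw [List.destutter'_cons_neg _ (by simp [hbc])]
      apply mem_destutter'_of_mem l b x
      rcases List.mem_cons.1 h with rfl | h
      · exact List.mem_cons_self
      · rcases List.mem_cons.1 h with rfl | h
        · exact List.mem_cons.2 (Or.inl hbc.symm)
        · exact List.mem_cons_of_mem _ h
    · rw [List.destutter'_cons_pos _ hbc]
      rcases List.mem_cons.1 h with h | h
      · exact h ▸ List.mem_cons_self
      · exact List.mem_cons_of_mem _ (mem_destutter'_of_mem l c x h)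

lemma mem_destutter {α : Type*} [DecidableEq α] (l : List α) (x : α) (h : x ∈ l) :
    x ∈ l.destutter (· ≠ ·) := by
  cases l with
  | nil => simpa using h
  | cons a l => rw [List.destutter_cons']; exact mem_destutter'_of_mem l a x h

section Main

variable {A : Type*} [DecidableEq A] {n N p : ℕ} (w : Fin N → A ⊕ Fin n)

lemma emb_inj (hw : IsVarWordM w) : Function.Injective (embW w) := by
  intro x y hxy
  funext l
  obtain ⟨i, hi⟩ := hw.1 l
  have := congrFun hxy i
  simpa [embW, hi] using this

lemma typeRows_emb (hw : IsVarWordM w) (t : Fin p → Fin n → A) :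
    typeRows (fun j => embW w (t j)) = typeRows t := by
  classical
  set P : (Fin p → A) → Bool := fun r => decide (∃ j j' : Fin p, r j ≠ r j') with hP
  set row : Fin n → (Fin p → A) := fun l => fun j => t j l with hrow
  set labels : List (Fin n) := (List.finRange N).filterMap (fun i => (w i).getRight?)
    with hlabels
  -- Step 1: the filtered rows of the image equal the filtered mapped label list
  have key : ∀ L : List (Fin N),
      (L.map (fun i => fun j => embW w (t j) i)).filter P
        = ((L.filterMap (fun i => (w i).getRight?)).map row).filter P := by
    intro L
    induction L with
    | nil => rfl
    | cons i L ih =>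
      cases h : w i with
      | inl a =>
        have hg : (fun j => embW w (t j) i) = fun _ => a := by
          funext j; simp [embW, h]
        rw [List.map_cons, hg, List.filter_cons_of_neg (by simp [hP]),
          List.filterMap_cons_none (by rw [h]; rfl), ih]
      | inr l =>
        have hg : (fun j => embW w (t j) i) = row l := by
          funext j; simp [embW, h, hrow]
        rw [List.map_cons, hg, List.filterMap_cons_some (by rw [h]; rfl),
          List.map_cons, List.filter_cons, List.filter_cons, ih]
  -- labels is nondecreasing and contains every label
  have hpwlab : labels.Pairwise (· ≤ ·) := by
    refine List.Pairwise.filterMap _ ?_ (List.pairwise_lt_finRange N)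
    intro i i' hii' b hb b' hb'
    have hbi : w i = Sum.inr b := by
      cases h : w i <;> simp [h, Option.mem_def] at hb <;> simp [hb]
    have hbi' : w i' = Sum.inr b' := by
      cases h : w i' <;> simp [h, Option.mem_def] at hb' <;> simp [hb']
    by_contra hlt
    exact absurd (hw.2 i' i b' b hbi' hbi (lt_of_not_ge hlt)) (by omega)
  have hall : ∀ l : Fin n, l ∈ labels := by
    intro l
    obtain ⟨i, hi⟩ := hw.1 l
    exact List.mem_filterMap.2 ⟨i, List.mem_finRange i, by simp [hi]⟩
  set q : Fin n → Bool := P ∘ row with hq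
  set L1 : List (Fin n) := labels.filter q with hL1
  set L2 : List (Fin n) := (List.finRange n).filter q with hL2
  set D : List (Fin n) := L1.destutter (· ≠ ·) with hD
  -- D = L2
  have hL2lt : L2.Pairwise (· < ·) :=
    List.Pairwise.sublist List.filter_sublist (List.pairwise_lt_finRange n)
  have hL1le : L1.Pairwise (· ≤ ·) := List.Pairwise.sublist List.filter_sublist hpwlab
  have hDle : D.Pairwise (· ≤ ·) := List.Pairwise.sublist (List.destutter_sublist _ _) hL1le
  have hDne : D.IsChain (· ≠ ·) := List.isChain_destutter _ _
  have hDlt : D.Pairwise (· < ·) := by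
    rw [← List.isChain_iff_pairwise]
    rw [← List.isChain_iff_pairwise] at hDle
    rw [List.isChain_iff_getElem] at hDle hDne ⊢
    intro i h
    exact lt_of_le_of_ne (hDle i h) (hDne i h)
  have hDeq : D = L2 := by
    have hmemD : ∀ x : Fin n, x ∈ D ↔ q x := by
      intro x
      constructor
      · intro hx
        have := (List.destutter_sublist _ L1).subset hx
        exact (List.mem_filter.1 this).2
      · intro hx
        exact mem_destutter L1 x (List.mem_filter.2 ⟨hall x, hx⟩)
    have hmemL2 : ∀ x : Fin n, x ∈ L2 ↔ q x := by
      intro x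
      constructor
      · intro hx; exact (List.mem_filter.1 hx).2
      · intro hx; exact List.mem_filter.2 ⟨List.mem_finRange x, hx⟩
    refine List.Perm.eq_of_pairwise' hDle (hL2lt.imp le_of_lt)
      (List.perm_of_nodup_nodup_toFinset_eq
        (hDlt.imp ne_of_lt) (hL2lt.imp ne_of_lt) ?_)
    ext x
    simp only [List.mem_toFinset, hmemD, hmemL2]
  -- assemble
  have e1 : typeRows (fun j => embW w (t j))
      = (((List.finRange N).map (fun i => fun j => embW w (t j) i)).filter P).destutter
          (· ≠ ·) := rfl
  have e2 : typeRows t = ((L2.map row)).destutter (· ≠ ·) := by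
    rw [hL2]
    show (((List.finRange n).map row).filter P).destutter (· ≠ ·) = _
    rw [List.filter_map]
  rw [e1, key, ← hlabels, List.filter_map, ← hq, ← hL1, e2, ← hDeq, hD,
    ← destutter_map_destutter row L1]

lemma sep_emb (hw : IsVarWordM w) {ℓ : ℕ} (t : Fin p → Fin n → A)
    (h : SepTuple ℓ t) : SepTuple ℓ (fun j => embW w (t j)) := by
  classical
  choose σ hσ using hw.1
  have hσinj : Function.Injective σ := by
    intro a b hab
    have : (Sum.inr a : A ⊕ Fin n) = Sum.inr b := by rw [← hσ a, ← hσ b, hab]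
    exact Sum.inr.inj this
  intro j hj
  obtain ⟨I, hI, hsep⟩ := h j hj
  refine ⟨I.image σ, by rw [Finset.card_image_of_injective _ hσinj, hI], ?_⟩
  intro qq hq
  obtain ⟨i, hiI, hne⟩ := hsep qq hq
  exact ⟨σ i, Finset.mem_image_of_mem _ hiI, by simpa [embW, hσ i] using hne⟩

lemma sep_emb_rev (hn : 0 < n) {ℓ : ℕ} (t : Fin p → Fin n → A)
    (h : SepTuple ℓ (fun j => embW w (t j))) : SepTuple (min ℓ n) t := by
  classical
  intro j hj
  obtain ⟨I', hI', hsep⟩ := h j hj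
  set lab : Fin N → Fin n := fun i => Sum.elim (fun _ => (⟨0, hn⟩ : Fin n)) id (w i)
    with hlab
  have hmin : (I'.image lab).card ≤ min ℓ n := by
    refine le_min ?_ ?_
    · exact hI' ▸ Finset.card_image_le
    · simpa using Finset.card_le_univ (I'.image lab)
  obtain ⟨I, hsub, -, hcard⟩ := Finset.exists_subsuperset_card_eq
    (Finset.subset_univ (I'.image lab)) hmin (by simpa using min_le_right ℓ n)
  refine ⟨I, hcard, fun qq hq => ?_⟩
  obtain ⟨i, hiI', hne⟩ := hsep qq hq
  cases hwi : w i with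
  | inl a => exact absurd (by simp [embW, hwi]) hne
  | inr l =>
    refine ⟨l, hsub ?_, by simpa [embW, hwi] using hne⟩
    have : lab i = l := by simp [hlab, hwi]
    exact this ▸ Finset.mem_image_of_mem lab hiI'

lemma sep_univ (hn : 0 < n) (t : Fin p → Fin n → A) (ht : Function.Injective t) :
    SepTuple n t := by
  intro j hj
  refine ⟨Finset.univ, by simp, fun q hq => ?_⟩
  have hne : t j ≠ t q := fun h =>
    absurd (ht h) (Fin.ne_of_val_ne (by omega))
  obtain ⟨i, hi⟩ := Function.ne_iff.1 hne
  exact ⟨i, Finset.mem_univ i, hi⟩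

lemma sepIndexTuple_emb (hw : IsVarWordM w) (hn : 0 < n) (t : Fin p → Fin n → A)
    (ht : Function.Injective t) :
    sepIndexTuple (fun j => embW w (t j)) = sepIndexTuple t := by
  have hmem1 : n ∈ {ℓ | 0 < ℓ ∧ SepTuple ℓ t} := ⟨hn, sep_univ hn t ht⟩
  have hmem2 : n ∈ {ℓ | 0 < ℓ ∧ SepTuple ℓ (fun j => embW w (t j))} :=
    ⟨hn, sep_emb w hw t (sep_univ hn t ht)⟩
  refine le_antisymm ?_ ?_
  · have h := Nat.sInf_mem (⟨n, hmem1⟩ : Set.Nonempty _)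
    exact Nat.sInf_le ⟨h.1, sep_emb w hw t h.2⟩
  · have h := Nat.sInf_mem (⟨n, hmem2⟩ : Set.Nonempty _)
    calc sepIndexTuple t
        ≤ min (sepIndexTuple (fun j => embW w (t j))) n :=
          Nat.sInf_le ⟨lt_min h.1 hn, sep_emb_rev w hn t h.2⟩
      _ ≤ sepIndexTuple (fun j => embW w (t j)) := min_le_left _ _

end Main

end Stmt19Aux



theorem stmt19 {A : Type*} [Fintype A] [DecidableEq A]
    (hA : 2 ≤ Fintype.card A) {n N p : ℕ} (hn : 0 < n)
    (hp : 2 ≤ p) (hpc : p ≤ Fintype.card A ^ n)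
    (w : Fin N → A ⊕ Fin n) (hw : IsVarWordM w) :
    (∀ t : Fin p → Fin n → A, Function.Injective t →
      typeRows (fun j => embW w (t j)) = typeRows t ∧
      sepIndexTuple (fun j => embW w (t j)) = sepIndexTuple t) ∧
    (∀ G : Finset (Fin n → A), G.Nonempty →
      SameType G (Finset.image (embW w) G) ∧
      sepIndexSet (Finset.image (embW w) G) = sepIndexSet G) := by
  classical
  have hinj : Function.Injective (embW w) := Stmt19Aux.emb_inj w hw
  refine ⟨fun t ht => ⟨Stmt19Aux.typeRows_emb w hw t, Stmt19Aux.sepIndexTuple_emb w hw hn t ht⟩,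
    fun G hG => ?_⟩
  -- canonical enumeration of G
  set t₁ : Fin G.card → Fin n → A := fun j => ((G.equivFin.symm j : {x // x ∈ G}) : Fin n → A)
    with ht₁
  have ht₁inj : Function.Injective t₁ :=
    Subtype.val_injective.comp G.equivFin.symm.injective
  have ht₁mem : ∀ j, t₁ j ∈ G := fun j => (G.equivFin.symm j).2
  have ht₁surj : ∀ x, x ∈ G ↔ ∃ j, t₁ j = x := by
    intro x
    constructor
    · intro hx
      exact ⟨G.equivFin ⟨x, hx⟩, by simp [ht₁]⟩
    · rintro ⟨j, rfl⟩
      exact ht₁mem j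
  constructor
  · -- SameType
    refine ⟨G.card, t₁, fun j => embW w (t₁ j), ht₁inj, hinj.comp ht₁inj, ht₁surj, ?_,
      (Stmt19Aux.typeRows_emb w hw t₁).symm⟩
    intro x
    rw [Finset.mem_image]
    constructor
    · rintro ⟨g, hg, rfl⟩
      obtain ⟨j, rfl⟩ := (ht₁surj g).1 hg
      exact ⟨j, rfl⟩
    · rintro ⟨j, rfl⟩
      exact ⟨t₁ j, ht₁mem j, rfl⟩
  · -- sepIndexSet
    have hcard : (Finset.image (embW w) G).card = G.card :=
      Finset.card_image_of_injective G hinj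
    rw [sepIndexSet, sepIndexSet, hcard]
    set SG : Set ℕ := {ℓ | 0 < ℓ ∧ ∃ t : Fin G.card → Fin n → A,
      Function.Injective t ∧ (∀ j, t j ∈ G) ∧ SepTuple ℓ t} with hSG
    set SI : Set ℕ := {ℓ | 0 < ℓ ∧ ∃ t : Fin G.card → Fin N → A,
      Function.Injective t ∧ (∀ j, t j ∈ Finset.image (embW w) G) ∧ SepTuple ℓ t} with hSI
    have fwd : ∀ ℓ ∈ SG, ℓ ∈ SI := by
      rintro ℓ ⟨h0, t, hti, htm, hts⟩
      exact ⟨h0, fun j => embW w (t j), hinj.comp hti,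
        fun j => Finset.mem_image_of_mem _ (htm j), Stmt19Aux.sep_emb w hw t hts⟩
    have bwd : ∀ ℓ ∈ SI, min ℓ n ∈ SG := by
      rintro ℓ ⟨h0, t', ht'i, ht'm, ht's⟩
      have hmem : ∀ j, ∃ g, g ∈ G ∧ embW w g = t' j := by
        intro j
        simpa [Finset.mem_image] using ht'm j
      choose s hsG hse using hmem
      refine ⟨lt_min h0 hn, s, ?_, hsG, ?_⟩
      · intro j j' hjj'
        apply ht'i
        rw [← hse j, ← hse j', hjj']
      · apply Stmt19Aux.sep_emb_rev w hn s
        have : (fun j => embW w (s j)) = t' := funext hse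
        rw [this]
        exact ht's
    have hnSG : n ∈ SG := ⟨hn, t₁, ht₁inj, ht₁mem, Stmt19Aux.sep_univ hn t₁ ht₁inj⟩
    refine le_antisymm ?_ ?_
    · have h := Nat.sInf_mem (⟨n, hnSG⟩ : Set.Nonempty SG)
      exact Nat.sInf_le (fwd _ h)
    · have h := Nat.sInf_mem (⟨n, fwd n hnSG⟩ : Set.Nonempty SI)
      calc sInf SG ≤ min (sInf SI) n := Nat.sInf_le (bwd _ h)
        _ ≤ sInf SI := min_le_left _ _
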